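/- Let K ⊆ E₂ be a closed, convex cone, let F be K-convex with nonempty domain dom F ⊆ E₁, and let g : E₂ → ℝ ∪ {+∞} be proper and convex satisfying condition (M): g(F(x)) ≤ g(y) for every (x,y) ∈ epi_K F. Assume the qualification condition F(ri(dom F)) ∩ ri(dom g − K) ≠ ∅. Then for every p ∈ E₁ the infimum inf_{v ∈ −K°} (g*(v) + (⟨v,F⟩)*(p)) is attained (possibly with value +∞), and (g ∘ F)*(p) = min_{v ∈ −K°} (g*(v) + (⟨v,F⟩)*(p)); moreover dom (g ∘ F)* = {p ∈ E₁ : there exists v ∈ dom g* ∩ (−K°) with (⟨v,F⟩)*(p) < +∞}. -/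

import Mathlib

open scoped RealInnerProductSpace Pointwise
open Filter

noncomputable section

/-- Convexity of an extended-real-valued function, defined via convexity of its epigraph. -/
def EConvexOn {E : Type*} [AddCommGroup E] [Module ℝ E] (f : E → EReal) : Prop :=
  Convex ℝ {p : E × ℝ | f p.1 ≤ (p.2 : EReal)}

/-- Closedness (lower semicontinuity) of an extended-real-valued function,
defined via closedness of its epigraph. -/
def EClosed {E : Type*} [TopologicalSpace E] (f : E → EReal) : Prop :=
  IsClosed {p : E × ℝ | f p.1 ≤ (p.2 : EReal)}

/-- Properness: the domain is nonempty and the function never takes the value `-∞`. -/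
def EProper {E : Type*} (f : E → EReal) : Prop :=
  (∃ x, f x < ⊤) ∧ ∀ x, f x ≠ ⊥

/-- The (effective) domain of an extended-real-valued function. -/
def edom {E : Type*} (f : E → EReal) : Set E := {x | f x < ⊤}

/-- The Fenchel conjugate. -/
def econj {E : Type*} [NormedAddCommGroup E] [InnerProductSpace ℝ E]
    (f : E → EReal) (y : E) : EReal :=
  ⨆ x, ((⟪y, x⟫ : ℝ) : EReal) - f x

/-- The convex subdifferential of `f` at `x₀`. -/
def esubdiff {E : Type*} [NormedAddCommGroup E] [InnerProductSpace ℝ E]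
    (f : E → EReal) (x₀ : E) : Set E :=
  {w | ∀ x, f x₀ + ((⟪w, x - x₀⟫ : ℝ) : EReal) ≤ f x}

/-- `K` is a cone: it is stable under multiplication by nonnegative scalars. -/
def IsCone {E : Type*} [SMul ℝ E] (K : Set E) : Prop :=
  ∀ ⦃t : ℝ⦄, 0 ≤ t → ∀ ⦃x⦄, x ∈ K → t • x ∈ K

/-- The polar cone `K° = {v : ⟪v,x⟫ ≤ 0 for all x ∈ K}`. -/
def polarCone {E : Type*} [NormedAddCommGroup E] [InnerProductSpace ℝ E] (K : Set E) : Set E :=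
  {v | ∀ x ∈ K, ⟪v, x⟫ ≤ (0 : ℝ)}

/-- The `K`-epigraph of a map `F` with domain `D`. -/
def epiK {E₁ E₂ : Type*} [AddCommGroup E₂] (K : Set E₂) (D : Set E₁) (F : E₁ → E₂) :
    Set (E₁ × E₂) :=
  {p | p.1 ∈ D ∧ p.2 - F p.1 ∈ K}

/-- The graph of a map `F` with domain `D`. -/
def gphF {E₁ E₂ : Type*} (D : Set E₁) (F : E₁ → E₂) : Set (E₁ × E₂) :=
  {p | p.1 ∈ D ∧ p.2 = F p.1}

open Classical in
/-- The scalarization `⟨v,F⟩` of the map `F` with domain `D`: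
it equals `⟪v, F x⟫` on `D` and `+∞` elsewhere. -/
def scal {E₁ E₂ : Type*} [NormedAddCommGroup E₂] [InnerProductSpace ℝ E₂]
    (v : E₂) (D : Set E₁) (F : E₁ → E₂) : E₁ → EReal :=
  fun x => if x ∈ D then ((⟪v, F x⟫ : ℝ) : EReal) else ⊤

open Classical in
/-- The composition `g ∘ F` for a map `F` with domain `D`:
it equals `g (F x)` on `D` and `+∞` elsewhere. -/
def compFn {E₁ E₂ : Type*} (g : E₂ → EReal) (D : Set E₁) (F : E₁ → E₂) : E₁ → EReal :=
  fun x => if x ∈ D then g (F x) else ⊤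

open Classical in
/-- The indicator function of a set: `0` on `S` and `+∞` off `S`. -/
def eindicator {E : Type*} (S : Set E) (x : E) : EReal := if x ∈ S then 0 else ⊤

/-- The support function of a set. -/
def suppFn {E : Type*} [NormedAddCommGroup E] [InnerProductSpace ℝ E] (S : Set E) (y : E) :
    EReal :=
  ⨆ x ∈ S, ((⟪x, y⟫ : ℝ) : EReal)

/-- The support function of a subset of a product of two inner product spaces,
with respect to the natural sum inner product on the product. -/
def suppFn2 {E₁ E₂ : Type*} [NormedAddCommGroup E₁] [InnerProductSpace ℝ E₁]
    [NormedAddCommGroup E₂] [InnerProductSpace ℝ E₂]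
    (S : Set (E₁ × E₂)) (y : E₁ × E₂) : EReal :=
  ⨆ p ∈ S, ((⟪p.1, y.1⟫ + ⟪p.2, y.2⟫ : ℝ) : EReal)

/-- The horizon (recession) cone of a set `C`. -/
def horizonCone {E : Type*} [AddCommGroup E] [Module ℝ E] [TopologicalSpace E] (C : Set E) :
    Set E :=
  {w | ∀ x ∈ C, ∀ t : ℝ, 0 ≤ t → x + t • w ∈ closure C}

/-- The lower semicontinuous hull:
`(cl f)(x) = inf {a : ∃ xₖ → x with f (xₖ) → a}`. -/
def lscHull {E : Type*} [TopologicalSpace E] (f : E → EReal) (x : E) : EReal :=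
  sInf {a : EReal |
    ∃ u : ℕ → E, Tendsto u atTop (nhds x) ∧ Tendsto (fun n => f (u n)) atTop (nhds a)}

variable {E E₁ E₂ : Type*}
  [NormedAddCommGroup E] [InnerProductSpace ℝ E] [FiniteDimensional ℝ E]
  [NormedAddCommGroup E₁] [InnerProductSpace ℝ E₁] [FiniteDimensional ℝ E₁]
  [NormedAddCommGroup E₂] [InnerProductSpace ℝ E₂] [FiniteDimensional ℝ E₂]

set_option linter.unusedSectionVars false
set_option linter.unusedVariables false

lemma exists_pos_forall_add_smul_mem {E : Type*} [NormedAddCommGroup E] [NormedSpace ℝ E]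
    {s : Set E} {x : E} (hx : x ∈ intrinsicInterior ℝ s) {d : E}
    (hd : d ∈ (affineSpan ℝ s).direction) :
    ∃ ε : ℝ, 0 < ε ∧ ∀ t : ℝ, |t| ≤ ε → x + t • d ∈ s := by
  obtain ⟨y, hy, hyx⟩ := hx
  have hxspan : x ∈ affineSpan ℝ s := by rw [← hyx]; exact y.2
  have hmem : ∀ t : ℝ, x + t • d ∈ affineSpan ℝ s := by
    intro t
    have := AffineSubspace.vadd_mem_of_mem_direction
      (Submodule.smul_mem _ t hd) hxspan
    simpa [vadd_eq_add, add_comm] using this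
  set γ : ℝ → (affineSpan ℝ s : Set E) := fun t => ⟨x + t • d, hmem t⟩ with hγ
  have hγcont : Continuous γ := by
    apply Continuous.subtype_mk
    continuity
  have hγ0 : γ 0 = y := by
    apply Subtype.ext
    simp [hγ, ← hyx]
  have hopen : IsOpen (γ ⁻¹' interior (Subtype.val ⁻¹' s : Set (affineSpan ℝ s))) :=
    hγcont.isOpen_preimage _ isOpen_interior
  have h0 : (0 : ℝ) ∈ γ ⁻¹' interior (Subtype.val ⁻¹' s : Set (affineSpan ℝ s)) := by
    simp only [Set.mem_preimage, hγ0]; exact hy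
  obtain ⟨r, hr, hball⟩ := Metric.isOpen_iff.1 hopen 0 h0
  refine ⟨r / 2, by linarith, fun t ht => ?_⟩
  have : t ∈ Metric.ball (0 : ℝ) r := by
    simp only [Metric.mem_ball, Real.dist_eq, sub_zero]
    linarith [abs_nonneg t]
  have := interior_subset (hball this)
  simpa [γ] using this

lemma ereal_coe_sub_le {c a : ℝ} {G : EReal} (hG : G ≠ ⊥) (h : (c : EReal) - G ≤ (a : EReal)) :
    ((c - a : ℝ) : EReal) ≤ G := by
  induction G using EReal.rec with
  | bot => exact absurd rfl hG
  | coe g =>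
      rw [← EReal.coe_sub] at h
      exact_mod_cast by linarith [(EReal.coe_le_coe_iff.1 h)]
  | top => exact le_top

lemma ereal_sub_le_sub_add (G : EReal) (hG : G ≠ ⊥) (a b : ℝ) :
    (a : EReal) - G ≤ ((b : EReal) - G) + ((a - b : ℝ) : EReal) := by
  induction G using EReal.rec with
  | bot => exact absurd rfl hG
  | coe g =>
      rw [← EReal.coe_sub, ← EReal.coe_sub, ← EReal.coe_add]
      exact_mod_cast by linarith
  | top => simp [EReal.sub_top]

lemma ereal_lt_top_of_add_lt_top {x y : EReal} (hx : x ≠ ⊥) (hy : y ≠ ⊥) (h : x + y < ⊤) :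
    x < ⊤ ∧ y < ⊤ := by
  constructor
  · by_contra hx'
    rw [top_le_iff.1 (not_lt.1 hx'), EReal.top_add_of_ne_bot hy] at h
    exact lt_irrefl _ h
  · by_contra hy'
    rw [top_le_iff.1 (not_lt.1 hy'), EReal.add_top_of_ne_bot hx] at h
    exact lt_irrefl _ h

set_option maxHeartbeats 1600000 in
lemma sep_exists_multiplier
    {K : Set E₂} (hK_cone : IsCone K) (hK_conv : Convex ℝ K)
    {D : Set E₁} {F : E₁ → E₂} (hF : Convex ℝ (epiK K D F))
    {g : E₂ → EReal} (hg_proper : EProper g) (hg_conv : EConvexOn g)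
    (hM : ∀ q ∈ epiK K D F, g (F q.1) ≤ g q.2)
    {xb : E₁} (hxb : xb ∈ intrinsicInterior ℝ D)
    (hFxb : F xb ∈ intrinsicInterior ℝ (edom g - K))
    (p : E₁) (a : ℝ)
    (h_le : ∀ x ∈ D, ((⟪p, x⟫ : ℝ) : EReal) - g (F x) ≤ (a : EReal)) :
    ∃ v : E₂, (∀ k ∈ K, 0 ≤ ⟪v, k⟫) ∧
      ∀ x ∈ D, ∀ y : E₂,
        (((⟪v, y⟫ : ℝ) : EReal) - g y) + ((⟪p, x⟫ - ⟪v, F x⟫ : ℝ) : EReal) ≤ (a : EReal) := by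
  classical
  obtain ⟨⟨y₀, hgy₀⟩, hg_bot⟩ := hg_proper
  have hxbD : xb ∈ D := intrinsicInterior_subset hxb
  have hFxbS : F xb ∈ edom g - K := intrinsicInterior_subset hFxb
  obtain ⟨ys, hys, ks, hks, hysks⟩ := Set.mem_sub.1 hFxbS
  have h0K : (0 : E₂) ∈ K := by
    have := hK_cone le_rfl hks
    simpa using this
  have hKadd : ∀ k1 ∈ K, ∀ k2 ∈ K, k1 + k2 ∈ K := by
    intro k1 hk1 k2 hk2
    have hmid : (2⁻¹ : ℝ) • k1 + (2⁻¹ : ℝ) • k2 ∈ K :=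
      hK_conv hk1 hk2 (by norm_num) (by norm_num) (by norm_num)
    have := hK_cone (by norm_num : (0:ℝ) ≤ 2) hmid
    convert this using 1
    module
  -- the separation set
  set T : Set (E₂ × ℝ) :=
    {q | ∃ x ∈ D, ∃ y : E₂, y - F x - q.1 ∈ K ∧
      g y < ((⟪p, x⟫ + q.2 - a : ℝ) : EReal)} with hTdef
  -- T is convex
  have hTconv : Convex ℝ T := by
    rintro ⟨z₁, r₁⟩ ⟨x₁, hx₁, y₁, hk₁, hg₁⟩ ⟨z₂, r₂⟩ ⟨x₂, hx₂, y₂, hk₂, hg₂⟩ s t hs ht hst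
    have hgr₁ : g y₁ ≠ ⊤ := hg₁.ne_top
    have hgr₂ : g y₂ ≠ ⊤ := hg₂.ne_top
    set s₁ := (g y₁).toReal with hs₁
    set s₂ := (g y₂).toReal with hs₂
    have he₁ : g y₁ = (s₁ : EReal) := (EReal.coe_toReal hgr₁ (hg_bot _)).symm
    have he₂ : g y₂ = (s₂ : EReal) := (EReal.coe_toReal hgr₂ (hg_bot _)).symm
    have hc₁ : s₁ < ⟪p, x₁⟫ + r₁ - a := by
      rw [he₁] at hg₁; exact_mod_cast hg₁
    have hc₂ : s₂ < ⟪p, x₂⟫ + r₂ - a := by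
      rw [he₂] at hg₂; exact_mod_cast hg₂
    have hepi₁ : ((x₁, y₁ - z₁) : E₁ × E₂) ∈ epiK K D F := by
      refine ⟨hx₁, ?_⟩
      have : y₁ - z₁ - F x₁ = y₁ - F x₁ - z₁ := by abel
      rw [this]; exact hk₁
    have hepi₂ : ((x₂, y₂ - z₂) : E₁ × E₂) ∈ epiK K D F := by
      refine ⟨hx₂, ?_⟩
      have : y₂ - z₂ - F x₂ = y₂ - F x₂ - z₂ := by abel
      rw [this]; exact hk₂
    have hcomb := hF hepi₁ hepi₂ hs ht hst
    have hcomb1 : s • x₁ + t • x₂ ∈ D := hcomb.1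
    have hcomb2 : (s • (y₁ - z₁) + t • (y₂ - z₂)) - F (s • x₁ + t • x₂) ∈ K := hcomb.2
    refine ⟨s • x₁ + t • x₂, hcomb1, s • y₁ + t • y₂, ?_, ?_⟩
    · have heq : s • y₁ + t • y₂ - F (s • x₁ + t • x₂) - (s • (z₁, r₁) + t • (z₂, r₂)).1
          = (s • (y₁ - z₁) + t • (y₂ - z₂)) - F (s • x₁ + t • x₂) := by
        simp only [Prod.smul_mk, Prod.mk_add_mk]
        module
      rw [heq]; exact hcomb2
    · have hgepi : g (s • y₁ + t • y₂) ≤ ((s * s₁ + t * s₂ : ℝ) : EReal) := by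
        have h1 : ((y₁, s₁) : E₂ × ℝ) ∈ {q : E₂ × ℝ | g q.1 ≤ (q.2 : EReal)} := le_of_eq he₁
        have h2 : ((y₂, s₂) : E₂ × ℝ) ∈ {q : E₂ × ℝ | g q.1 ≤ (q.2 : EReal)} := le_of_eq he₂
        have := hg_conv h1 h2 hs ht hst
        simpa using this
      have hstrict : s * s₁ + t * s₂ <
          ⟪p, s • x₁ + t • x₂⟫ + (s • (z₁, r₁) + t • (z₂, r₂)).2 - a := by
        have hinner : ⟪p, s • x₁ + t • x₂⟫ = s * ⟪p, x₁⟫ + t * ⟪p, x₂⟫ := by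
          rw [inner_add_right, real_inner_smul_right, real_inner_smul_right]
        have hsnd : (s • (z₁, r₁) + t • (z₂, r₂)).2 = s * r₁ + t * r₂ := rfl
        rw [hinner, hsnd]
        rcases eq_or_lt_of_le hs with h | h
        · have hts : t = 1 := by linarith
          rw [← h, hts]; simpa using hc₂
        · calc s * s₁ + t * s₂ < s * (⟪p, x₁⟫ + r₁ - a) + t * s₂ := by
                have := mul_lt_mul_of_pos_left hc₁ h
                linarith
            _ ≤ s * (⟪p, x₁⟫ + r₁ - a) + t * (⟪p, x₂⟫ + r₂ - a) := by
                nlinarith [mul_le_mul_of_nonneg_left hc₂.le ht]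
            _ = s * ⟪p, x₁⟫ + t * ⟪p, x₂⟫ + (s * r₁ + t * r₂) - a := by linear_combination (-a) * hst
      exact lt_of_le_of_lt hgepi (by exact_mod_cast hstrict)
  -- T is upward closed
  have hTup : ∀ z : E₂, ∀ r r' : ℝ, (z, r) ∈ T → r ≤ r' → (z, r') ∈ T := by
    rintro z r r' ⟨x, hx, y, hk, hg⟩ hrr
    exact ⟨x, hx, y, hk, lt_of_lt_of_le hg (by exact_mod_cast by linarith)⟩
  -- generic elements of T
  have hzT : ∀ x ∈ D, ∀ y ∈ edom g, ∀ k ∈ K,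
      ((y - k - F x, (g y).toReal + a - ⟪p, x⟫ + 1) : E₂ × ℝ) ∈ T := by
    intro x hx y hy k hk
    refine ⟨x, hx, y, ?_, ?_⟩
    · have : y - F x - (y - k - F x) = k := by abel
      rw [this]; exact hk
    · have hreal : g y = ((g y).toReal : EReal) :=
        (EReal.coe_toReal hy.ne_top (hg_bot _)).symm
      have harg : ⟪p, x⟫ + ((g y).toReal + a - ⟪p, x⟫ + 1) - a = (g y).toReal + 1 := by ring
      show g y < ((⟪p, x⟫ + ((g y).toReal + a - ⟪p, x⟫ + 1) - a : ℝ) : EReal)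
      rw [harg, hreal]
      exact_mod_cast lt_add_one _
  -- base point of T
  set r₀ : ℝ := (g ys).toReal + a - ⟪p, xb⟫ + 1 with hr₀
  have hq₀ : ((0 : E₂), r₀) ∈ T := by
    have := hzT xb hxbD ys hys ks hks
    rw [hysks] at this
    simpa using this
  -- (0,0) is not in T
  have h00 : ((0 : E₂), (0 : ℝ)) ∉ T := by
    rintro ⟨x, hx, y, hk, hg⟩
    have hyFx : y - F x ∈ K := by
      have : y - F x - 0 = y - F x := by abel
      rwa [this] at hk
    have hgFx : g (F x) ≤ g y := hM (x, y) ⟨hx, hyFx⟩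
    have h1 : ((⟪p, x⟫ - a : ℝ) : EReal) ≤ g (F x) :=
      ereal_coe_sub_le (hg_bot _) (h_le x hx)
    have h2 : ((⟪p, x⟫ - a : ℝ) : EReal) < ((⟪p, x⟫ + 0 - a : ℝ) : EReal) :=
      lt_of_le_of_lt (h1.trans hgFx) hg
    have := EReal.coe_lt_coe_iff.1 h2
    linarith
  -- the span of the first coordinates
  set V : Submodule ℝ E₂ := Submodule.span ℝ (Prod.fst '' T) with hVdef
  set W : Set (E₂ × ℝ) := T + ((Vᗮ : Set E₂) ×ˢ ({0} : Set ℝ)) with hWdef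
  have hWconv : Convex ℝ W :=
    hTconv.add (((Vᗮ).convex).prod (convex_singleton 0))
  have hq₀W : ((0 : E₂), r₀) ∈ W := by
    refine ⟨(0, r₀), hq₀, (0, 0), ?_, by simp⟩
    exact Set.mk_mem_prod (Submodule.zero_mem _) rfl
  -- affine span of W is everything
  have hTW : T ⊆ W := by
    intro q hq
    exact ⟨q, hq, (0, 0), Set.mk_mem_prod (Submodule.zero_mem _) rfl, by simp⟩
  have hWtop : affineSpan ℝ W = ⊤ := by
    have hvert : ((0 : E₂), (1 : ℝ)) ∈ vectorSpan ℝ W := by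
      have h1 : ((0 : E₂), r₀ + 1) ∈ W := hTW (hTup _ _ _ hq₀ (by linarith))
      have := vsub_mem_vectorSpan ℝ h1 hq₀W
      simpa using this
    have hperp : ∀ u ∈ Vᗮ, ((u, 0) : E₂ × ℝ) ∈ vectorSpan ℝ W := by
      intro u hu
      have h1 : ((0 : E₂) + u, r₀ + 0) ∈ W :=
        ⟨(0, r₀), hq₀, (u, 0), Set.mk_mem_prod hu rfl, rfl⟩
      have := vsub_mem_vectorSpan ℝ h1 hq₀W
      simpa using this
    have hfst : ∀ z ∈ V, ((z, 0) : E₂ × ℝ) ∈ vectorSpan ℝ W := by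
      intro z hz
      have hgen : Prod.fst '' T ⊆ {z | ((z, 0) : E₂ × ℝ) ∈ vectorSpan ℝ W} := by
        rintro _ ⟨⟨z', r'⟩, hz', rfl⟩
        have h1 : ((z', r') : E₂ × ℝ) -ᵥ ((0 : E₂), r₀) ∈ vectorSpan ℝ W :=
          vsub_mem_vectorSpan ℝ (hTW hz') hq₀W
        have h2 : ((z', r' - r₀) : E₂ × ℝ) ∈ vectorSpan ℝ W := by
          simpa using h1
        have h3 := Submodule.sub_mem _ h2 (Submodule.smul_mem _ (r' - r₀) hvert)
        simpa using h3
      have hsub : V ≤ Submodule.comap (LinearMap.inl ℝ E₂ ℝ) (vectorSpan ℝ W) := by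
        rw [hVdef]
        apply Submodule.span_le.2
        intro z' hz'
        exact hgen hz'
      exact hsub hz
    rw [eq_top_iff]
    intro w _
    have hdir : w -ᵥ ((0 : E₂), r₀) ∈ (affineSpan ℝ W).direction := by
      rw [direction_affineSpan]
      have hw1 : w.1 ∈ V ⊔ Vᗮ := by
        rw [Submodule.sup_orthogonal_of_hasOrthogonalProjection]; trivial
      obtain ⟨z₁, hz₁, z₂, hz₂, hsum⟩ := Submodule.mem_sup.1 hw1
      have : w -ᵥ ((0 : E₂), r₀) =
          ((z₁, 0) : E₂ × ℝ) + ((z₂, 0) : E₂ × ℝ) + (w.2 - r₀) • ((0 : E₂), (1 : ℝ)) := by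
        have : w = (w.1, w.2) := rfl
        rw [this, ← hsum]
        simp [Prod.ext_iff]
      rw [this]
      exact Submodule.add_mem _
        (Submodule.add_mem _ (hfst z₁ hz₁) (hperp z₂ hz₂))
        (Submodule.smul_mem _ _ hvert)
    have := AffineSubspace.vadd_mem_of_mem_direction hdir
      (subset_affineSpan ℝ W hq₀W)
    simpa using this
  have hWint : (interior W).Nonempty :=
    hWconv.interior_nonempty_iff_affineSpan_eq_top.2 hWtop
  -- (0,0) not in W
  have h00W : ((0 : E₂), (0 : ℝ)) ∉ W := by
    rintro ⟨⟨z, r⟩, hzr, ⟨u, ru⟩, hmem, hadd⟩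
    have hu : u ∈ Vᗮ := hmem.1
    have hru0 : ru = 0 := hmem.2
    have h1 : z + u = 0 := congrArg Prod.fst hadd
    have h2 : r + ru = 0 := congrArg Prod.snd hadd
    have hz : z ∈ V := Submodule.subset_span ⟨(z, r), hzr, rfl⟩
    have hzperp : z ∈ Vᗮ := by
      have hz' : z = -u := eq_neg_of_add_eq_zero_left h1
      rw [hz']; exact neg_mem hu
    have hz0 : z = 0 := by
      have := (Submodule.orthogonal_disjoint V).le_bot
        (Submodule.mem_inf.2 ⟨hz, hzperp⟩)
      simpa using this
    have hr0 : r = 0 := by rw [hru0] at h2; linarith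
    rw [hz0, hr0] at hzr; exact h00 hzr
  -- separation
  obtain ⟨f, hf⟩ := geometric_hahn_banach_open_point hWconv.interior isOpen_interior
    (fun h => h00W (interior_subset h))
  have hf0 : ∀ q ∈ interior W, f q < 0 := by
    intro q hq
    have := hf q hq
    rw [show ((0 : E₂), (0 : ℝ)) = 0 from rfl, map_zero] at this
    exact this
  -- f is nonpositive on all of W
  obtain ⟨q₁, hq₁⟩ := hWint
  have hfq₁ : f q₁ < 0 := hf0 q₁ hq₁
  have hfW : ∀ q ∈ W, f q ≤ 0 := by
    intro q hq
    by_contra hpos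
    push_neg at hpos
    set t : ℝ := f q / (f q - f q₁) with htdef
    have hden : 0 < f q - f q₁ := by linarith
    have ht0 : 0 < t := div_pos hpos hden
    have ht1 : t < 1 := (div_lt_one hden).2 (by linarith)
    have hmem : t • q₁ + (1 - t) • q ∈ interior W :=
      hWconv.combo_interior_self_mem_interior hq₁ hq ht0 (by linarith) (by ring)
    have := hf0 _ hmem
    rw [map_add, map_smul, map_smul] at this
    simp only [smul_eq_mul] at this
    have hteq : t * f q₁ + (1 - t) * f q = 0 := by
      have h' : t * (f q - f q₁) = f q := div_mul_cancel₀ _ hden.ne'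
      linear_combination (-1 : ℝ) * h'
    linarith
  -- decompose f
  set c : ℝ := f ((0 : E₂), (1 : ℝ)) with hcdef
  set φ : E₂ →L[ℝ] ℝ := f.comp (ContinuousLinearMap.inl ℝ E₂ ℝ) with hφdef
  have hφ : ∀ z : E₂, φ z = f (z, 0) := fun z => rfl
  have hdecomp : ∀ z : E₂, ∀ r : ℝ, f (z, r) = φ z + r * c := by
    intro z r
    have : ((z, r) : E₂ × ℝ) = (z, 0) + r • ((0 : E₂), (1 : ℝ)) := by
      simp [Prod.ext_iff]
    rw [this, map_add, map_smul, hφ]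
    simp [mul_comm, hcdef]
  -- φ vanishes on the orthogonal complement of V
  have hφperp : ∀ u ∈ Vᗮ, φ u = 0 := by
    intro u hu
    by_contra hne
    set t : ℝ := (1 - f (0, r₀)) / φ u with ht
    have hmem : ((0 : E₂) + t • u, r₀ + 0) ∈ W :=
      ⟨(0, r₀), hq₀, (t • u, 0), Set.mk_mem_prod (Submodule.smul_mem _ _ hu) rfl, rfl⟩
    have hle := hfW _ hmem
    have heq : f ((0 : E₂) + t • u, r₀ + 0) = f (0, r₀) + t * φ u := by
      have h1 : ((0 : E₂) + t • u, r₀ + 0) = ((0 : E₂), r₀) + (t • u, 0) := by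
        simp [Prod.ext_iff]
      rw [h1, map_add, ← hφ (t • u), map_smul]
      simp
    rw [heq] at hle
    have : t * φ u = 1 - f (0, r₀) := by
      rw [ht]; exact div_mul_cancel₀ _ hne
    rw [this] at hle
    linarith
  -- c is nonpositive
  have hc : c ≤ 0 := by
    by_contra hpos
    push_neg at hpos
    set t : ℝ := (1 - f (0, r₀)) / c with ht
    have htpos : 0 ≤ t := by
      have h1 : f ((0 : E₂), r₀) ≤ 0 := hfW _ (hTW hq₀)
      exact div_nonneg (by linarith) hpos.le
    have hmem : ((0 : E₂), r₀ + t) ∈ T := hTup _ _ _ hq₀ (by linarith [htpos])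
    have hle := hfW _ (hTW hmem)
    rw [hdecomp] at hle
    have h0r : f ((0:E₂), r₀) = φ 0 + r₀ * c := hdecomp 0 r₀
    have hφ0 : φ (0 : E₂) = 0 := map_zero φ
    have : t * c = 1 - f (0, r₀) := by rw [ht]; exact div_mul_cancel₀ _ hpos.ne'
    have hfr : f ((0:E₂), r₀) = r₀ * c := by rw [h0r, hφ0]; ring
    nlinarith [hle, this, hfr]
  rcases hc.lt_or_eq with hcneg | hc0
  · -- case c < 0 : construct the multiplier
    set v : E₂ := (-c)⁻¹ • ((InnerProductSpace.toDual ℝ E₂).symm φ) with hvdef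
    have hcpos : (0 : ℝ) < -c := by linarith
    have hvinner : ∀ z : E₂, ⟪v, z⟫ = (-c)⁻¹ * φ z := by
      intro z
      rw [hvdef, real_inner_smul_left, InnerProductSpace.toDual_symm_apply]
    have hkey : ∀ z : E₂, ∀ r : ℝ, ((z, r) : E₂ × ℝ) ∈ T → ⟪v, z⟫ ≤ r := by
      intro z r hzr
      have h1 := hfW _ (hTW hzr)
      rw [hdecomp] at h1
      rw [hvinner]
      rw [inv_mul_le_iff₀ hcpos]
      linarith
    refine ⟨v, ?_, ?_⟩
    · intro k₀ hk₀
      by_contra hneg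
      push_neg at hneg
      have hmem : ∀ t : ℝ, 0 ≤ t → ((-(t • k₀), r₀) : E₂ × ℝ) ∈ T := by
        intro t ht
        have hkt : ks + t • k₀ ∈ K := hKadd _ hks _ (hK_cone ht hk₀)
        have h3 := hzT xb hxbD ys hys _ hkt
        have heq : ys - (ks + t • k₀) - F xb = -(t • k₀) := by
          rw [← hysks]; abel
        rwa [heq] at h3
      set t₀ : ℝ := (|r₀| + 1) / (-⟪v, k₀⟫) with ht₀
      have hnegpos : 0 < -⟪v, k₀⟫ := by linarith
      have ht₀pos : 0 < t₀ := div_pos (by positivity) hnegpos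
      have h4 := hkey _ _ (hmem t₀ ht₀pos.le)
      have h5 : ⟪v, -(t₀ • k₀)⟫ = t₀ * (-⟪v, k₀⟫) := by
        rw [inner_neg_right, real_inner_smul_right]; ring
      rw [h5, ht₀, div_mul_cancel₀ _ hnegpos.ne'] at h4
      have := abs_nonneg r₀
      have := le_abs_self r₀
      linarith
    · intro x hx y
      by_cases hgy : g y = ⊤
      · rw [hgy]
        simp [EReal.sub_top]
      · have hyreal : g y = (((g y).toReal : ℝ) : EReal) :=
          (EReal.coe_toReal hgy (hg_bot _)).symm
        set s := (g y).toReal with hs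
        have hT' : ∀ r : ℝ, s - ⟪p, x⟫ + a < r → ⟪v, y - F x⟫ ≤ r := by
          intro r hr
          apply hkey _ _
          refine ⟨x, hx, y, ?_, ?_⟩
          · have : y - F x - (y - F x) = 0 := by abel
            rw [this]; exact h0K
          · rw [hyreal]
            exact_mod_cast by linarith
        have hle2 : ⟪v, y - F x⟫ ≤ s - ⟪p, x⟫ + a := by
          by_contra hgt
          push_neg at hgt
          have := hT' ((s - ⟪p, x⟫ + a + ⟪v, y - F x⟫) / 2) (by linarith)
          linarith
        rw [hyreal, ← EReal.coe_sub, ← EReal.coe_add, EReal.coe_le_coe_iff]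
        rw [inner_sub_right] at hle2
        linarith
  · -- case c = 0 : contradiction with the qualification condition
    exfalso
    -- φ is ≤ 0 on the set (edom g - K) - F(D)
    have hℓC₂ : ∀ x ∈ D, ∀ y ∈ edom g, ∀ k ∈ K, φ (y - k - F x) ≤ 0 := by
      intro x hx y hy k hk
      have h1 := hfW _ (hTW (hzT x hx y hy k hk))
      rw [hdecomp] at h1
      rw [hc0] at h1
      linarith
    -- in fact φ vanishes there, thanks to the CQ
    have hℓ0 : ∀ x ∈ D, ∀ y ∈ edom g, ∀ k ∈ K, φ (y - k - F x) = 0 := by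
      intro x hx y hy k hk
      set w : E₂ := y - k with hwdef
      have hwS : w ∈ edom g - K := Set.sub_mem_sub hy hk
      have hd₁ : xb - x ∈ (affineSpan ℝ D).direction := by
        have := AffineSubspace.vsub_mem_direction
          (subset_affineSpan ℝ D hxbD) (subset_affineSpan ℝ D hx)
        simpa using this
      obtain ⟨ε₁, hε₁, hD₁⟩ := exists_pos_forall_add_smul_mem hxb hd₁
      have hd₂ : F xb - w ∈ (affineSpan ℝ (edom g - K)).direction := by
        have := AffineSubspace.vsub_mem_direction
          (subset_affineSpan ℝ _ hFxbS) (subset_affineSpan ℝ _ hwS)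
        simpa using this
      obtain ⟨ε₂, hε₂, hS₂⟩ := exists_pos_forall_add_smul_mem hFxb hd₂
      set δ : ℝ := min ε₁ ε₂ with hδdef
      have hδpos : 0 < δ := lt_min hε₁ hε₂
      have hx'mem : xb + δ • (xb - x) ∈ D :=
        hD₁ δ (by rw [abs_of_pos hδpos]; exact min_le_left _ _)
      set x' : E₁ := xb + δ • (xb - x) with hx'def
      have hwt : F xb + δ • (F xb - w) ∈ edom g - K :=
        hS₂ δ (by rw [abs_of_pos hδpos]; exact min_le_right _ _)
      set lam : ℝ := (1 + δ)⁻¹ with hlam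
      have h1δ : (0 : ℝ) < 1 + δ := by linarith
      have hlampos : 0 < lam := inv_pos.2 h1δ
      have hlamle : lam * (1 + δ) = 1 := inv_mul_cancel₀ h1δ.ne'
      have hlsum : lam + lam * δ = 1 := by rw [← hlamle]; ring
      have hepi1 : ((x', F x') : E₁ × E₂) ∈ epiK K D F := ⟨hx'mem, by
        simpa using h0K⟩
      have hepi2 : ((x, F x) : E₁ × E₂) ∈ epiK K D F := ⟨hx, by
        simpa using h0K⟩
      have hcomb := hF hepi1 hepi2 hlampos.le
        (by positivity : (0 : ℝ) ≤ lam * δ) hlsum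
      have hfstc : lam • x' + (lam * δ) • x = xb := by
        rw [hx'def]
        match_scalars
        · linear_combination hlsum
        · ring
      have hk₁K : lam • F x' + (lam * δ) • F x - F xb ∈ K := by
        have h2 : (lam • F x' + (lam * δ) • F x) - F (lam • x' + (lam * δ) • x) ∈ K := by
          simpa using hcomb.2
        rwa [hfstc] at h2
      set k₁ : E₂ := lam • F x' + (lam * δ) • F x - F xb with hk₁def
      -- k₁ is a direction of the affine span of edom g - K
      have hk₁dir : k₁ ∈ (affineSpan ℝ (edom g - K)).direction := by
        have ha : ys - 0 ∈ edom g - K := Set.sub_mem_sub hys h0K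
        have hb : ys - k₁ ∈ edom g - K := Set.sub_mem_sub hys hk₁K
        have := AffineSubspace.vsub_mem_direction
          (subset_affineSpan ℝ _ ha) (subset_affineSpan ℝ _ hb)
        have heq : (ys - 0) -ᵥ (ys - k₁) = k₁ := by
          rw [vsub_eq_sub]; abel
        rwa [heq] at this
      obtain ⟨ρ, hρpos, hρ⟩ := exists_pos_forall_add_smul_mem hFxb hk₁dir
      have hρS : F xb + ρ • k₁ ∈ edom g - K := hρ ρ (le_of_eq (abs_of_pos hρpos))
      have hφk₁ : φ k₁ ≤ 0 := by
        obtain ⟨y', hy', k', hk', heq⟩ := Set.mem_sub.1 hρS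
        have h3 := hℓC₂ xb hxbD y' hy' k' hk'
        have heq2 : y' - k' - F xb = ρ • k₁ := by rw [heq]; abel
        rw [heq2, map_smul] at h3
        simp only [smul_eq_mul] at h3
        nlinarith
      have hu₁mem : φ (F xb + δ • (F xb - w) - F x') ≤ 0 := by
        obtain ⟨y', hy', k', hk', heq⟩ := Set.mem_sub.1 hwt
        have h3 := hℓC₂ x' hx'mem y' hy' k' hk'
        have heq2 : y' - k' - F x' = F xb + δ • (F xb - w) - F x' := by rw [heq]
        rwa [heq2] at h3
      have hFx'eq : (1 + δ) • k₁ = F x' + δ • F x - (1 + δ) • F xb := by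
        rw [hk₁def, smul_sub, smul_add, smul_smul, smul_smul]
        rw [show (1 + δ) * lam = 1 by rw [mul_comm]; exact hlamle,
          show (1 + δ) * (lam * δ) = δ by
            rw [← mul_assoc, mul_comm (1 + δ) lam, hlamle, one_mul]]
        simp
      have hid : F xb + δ • (F xb - w) - F x' = δ • (F x - w) - (1 + δ) • k₁ := by
        rw [hFx'eq]
        module
      have hu₁ : δ * φ (F x - w) - (1 + δ) * φ k₁ ≤ 0 := by
        have h3 := hu₁mem
        rw [hid, map_sub, map_smul, map_smul] at h3
        simpa using h3
      have hge : 0 ≤ φ (w - F x) := by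
        have h4 : φ (F x - w) ≤ 0 := by nlinarith
        have h5 : φ (w - F x) = -φ (F x - w) := by
          rw [← map_neg]; congr 1; abel
        rw [h5]; linarith
      have hle' : φ (y - k - F x) ≤ 0 := hℓC₂ x hx y hy k hk
      have heqwf : y - k - F x = w - F x := by rw [hwdef]
      rw [heqwf]
      exact le_antisymm (heqwf ▸ hle') hge
    -- φ vanishes on V
    have hφV : ∀ z ∈ V, φ z = 0 := by
      intro z hz
      have hsub : V ≤ LinearMap.ker (φ : E₂ →ₗ[ℝ] ℝ) := by
        rw [hVdef]
        apply Submodule.span_le.2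
        rintro _ ⟨⟨z', r'⟩, hz', rfl⟩
        obtain ⟨x, hx, y, hk, hg⟩ := hz'
        have hy : y ∈ edom g := lt_of_lt_of_le hg le_top
        have hkK : y - F x - z' ∈ K := hk
        have heq : y - (y - F x - z') - F x = z' := by abel
        have := hℓ0 x hx y hy _ hkK
        rw [heq] at this
        exact this
      exact hsub hz
    -- contradiction with f q₁ < 0
    have hq₁1 : q₁.1 ∈ V ⊔ Vᗮ := by
      rw [Submodule.sup_orthogonal_of_hasOrthogonalProjection]; trivial
    obtain ⟨z₁, hz₁, z₂, hz₂, hsum⟩ := Submodule.mem_sup.1 hq₁1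
    have hφq₁ : φ q₁.1 = 0 := by
      rw [← hsum, map_add, hφV z₁ hz₁, hφperp z₂ hz₂]; ring
    have hfq₁' : f q₁ = 0 := by
      have : q₁ = (q₁.1, q₁.2) := rfl
      rw [this, hdecomp, hφq₁, hc0]; ring
    linarith

lemma weak_duality' {D : Set E₁} {F : E₁ → E₂}
    {g : E₂ → EReal} (hg_bot : ∀ x, g x ≠ ⊥) (p : E₁) (v : E₂) :
    econj (compFn g D F) p ≤ econj g v + econj (scal v D F) p := by
  rw [econj]
  apply iSup_le
  intro x
  by_cases hx : x ∈ D
  · have h1 : ((⟪p, x⟫ : ℝ) : EReal) - compFn g D F x ≤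
        (((⟪v, F x⟫ : ℝ) : EReal) - g (F x)) + ((⟪p, x⟫ - ⟪v, F x⟫ : ℝ) : EReal) := by
      rw [compFn, if_pos hx]
      exact ereal_sub_le_sub_add _ (hg_bot _) _ _
    refine h1.trans (add_le_add ?_ ?_)
    · exact le_iSup (fun y => ((⟪v, y⟫ : ℝ) : EReal) - g y) (F x)
    · have h2 : ((⟪p, x⟫ - ⟪v, F x⟫ : ℝ) : EReal) = ((⟪p, x⟫ : ℝ) : EReal) - scal v D F x := by
        rw [scal, if_pos hx, ← EReal.coe_sub]
      rw [h2]
      exact le_iSup (fun y => ((⟪p, y⟫ : ℝ) : EReal) - scal v D F y) x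
  · rw [compFn, if_neg hx]
    simp [EReal.sub_top]

set_option maxHeartbeats 1600000 in
/-- Under the Slater-type qualification condition
`F(ri(dom F)) ∩ ri(dom g - K) ≠ ∅`, the conjugate of the composite is
`(g ∘ F)*(p) = min_{v ∈ -K°} (g*(v) + ⟨v,F⟩*(p))`, the minimum being attained, and
`dom (g ∘ F)* = {p : ∃ v ∈ dom g* ∩ (-K°), ⟨v,F⟩*(p) < +∞}`. -/
theorem conjugate_of_composite_attained
    (K : Set E₂) (hK_cone : IsCone K) (hK_closed : IsClosed K) (hK_conv : Convex ℝ K)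
    (D : Set E₁) (hD : D.Nonempty) (F : E₁ → E₂) (hF : Convex ℝ (epiK K D F))
    (g : E₂ → EReal) (hg_proper : EProper g) (hg_conv : EConvexOn g)
    (hM : ∀ p ∈ epiK K D F, g (F p.1) ≤ g p.2)
    (hCQ : (F '' intrinsicInterior ℝ D ∩ intrinsicInterior ℝ (edom g - K)).Nonempty) :
    (∀ p : E₁, ∃ v ∈ -polarCone K,
      econj (compFn g D F) p = econj g v + econj (scal v D F) p ∧
      ∀ w ∈ -polarCone K,
        econj g v + econj (scal v D F) p ≤ econj g w + econj (scal w D F) p) ∧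
    edom (econj (compFn g D F))
      = {p : E₁ | ∃ v ∈ edom (econj g) ∩ (-polarCone K), econj (scal v D F) p < ⊤} := by
  classical
  have hg_bot : ∀ x, g x ≠ ⊥ := hg_proper.2
  obtain ⟨z0, ⟨xb, hxb, rfl⟩, hFxb⟩ := hCQ
  have hxbD : xb ∈ D := intrinsicInterior_subset hxb
  have hFxbS : F xb ∈ edom g - K := intrinsicInterior_subset hFxb
  obtain ⟨ys, hys, ks, hks, hysks⟩ := Set.mem_sub.1 hFxbS
  have hgFxb : g (F xb) < ⊤ := by
    have hepi : ((xb, ys) : E₁ × E₂) ∈ epiK K D F := by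
      refine ⟨hxbD, ?_⟩
      have : ys - F xb = ks := by rw [← hysks]; abel
      rw [this]; exact hks
    exact lt_of_le_of_lt (hM _ hepi) hys
  have hgFxbreal : g (F xb) = (((g (F xb)).toReal : ℝ) : EReal) :=
    (EReal.coe_toReal hgFxb.ne (hg_bot _)).symm
  -- the conjugate of the composition is never ⊥
  have hcompterm : ∀ p : E₁,
      ((⟪p, xb⟫ - (g (F xb)).toReal : ℝ) : EReal) ≤ econj (compFn g D F) p := by
    intro p
    have h1 := le_iSup (fun x => ((⟪p, x⟫ : ℝ) : EReal) - compFn g D F x) xb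
    have h2 : ((⟪p, xb⟫ : ℝ) : EReal) - compFn g D F xb
        = ((⟪p, xb⟫ - (g (F xb)).toReal : ℝ) : EReal) := by
      rw [compFn]
      simp only [if_pos hxbD]
      conv_lhs => rw [hgFxbreal]
      rw [← EReal.coe_sub]
    rw [h2] at h1
    exact h1
  have hcompbot : ∀ p : E₁, econj (compFn g D F) p ≠ ⊥ := by
    intro p h
    have := hcompterm p
    rw [h, le_bot_iff] at this
    exact (EReal.coe_ne_bot _) this
  -- the two summands of the dual objective are never ⊥
  have hAbot : ∀ v : E₂, econj g v ≠ ⊥ := by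
    intro v h
    have h1 := le_iSup (fun y => ((⟪v, y⟫ : ℝ) : EReal) - g y) ys
    have hysreal : g ys = (((g ys).toReal : ℝ) : EReal) :=
      (EReal.coe_toReal hys.ne (hg_bot _)).symm
    rw [econj] at h
    rw [h, le_bot_iff] at h1
    have h2 : ((⟪v, ys⟫ : ℝ) : EReal) - g ys = ((⟪v, ys⟫ - (g ys).toReal : ℝ) : EReal) := by
      conv_lhs => rw [hysreal]
      rw [← EReal.coe_sub]
    rw [h2] at h1
    exact (EReal.coe_ne_bot _) h1
  have hBbot : ∀ p : E₁, ∀ v : E₂, econj (scal v D F) p ≠ ⊥ := by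
    intro p v h
    have h1 := le_iSup (fun x => ((⟪p, x⟫ : ℝ) : EReal) - scal v D F x) xb
    rw [econj] at h
    rw [h, le_bot_iff] at h1
    have h2 : ((⟪p, xb⟫ : ℝ) : EReal) - scal v D F xb
        = ((⟪p, xb⟫ - ⟪v, F xb⟫ : ℝ) : EReal) := by
      rw [scal, if_pos hxbD, ← EReal.coe_sub]
    rw [h2] at h1
    exact (EReal.coe_ne_bot _) h1
  -- main attainment statement
  have hmain : ∀ p : E₁, ∃ v ∈ -polarCone K,
      econj (compFn g D F) p = econj g v + econj (scal v D F) p ∧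
      ∀ w ∈ -polarCone K,
        econj g v + econj (scal v D F) p ≤ econj g w + econj (scal w D F) p := by
    intro p
    by_cases htop : econj (compFn g D F) p = ⊤
    · refine ⟨0, ?_, ?_, ?_⟩
      · rw [Set.mem_neg]
        intro x hx
        simp
      · have h2 : (⊤ : EReal) ≤ econj g 0 + econj (scal 0 D F) p :=
          htop ▸ weak_duality' hg_bot p 0
        rw [htop, top_le_iff.1 h2]
      · intro w hw
        have h1 : (⊤ : EReal) ≤ econj g w + econj (scal w D F) p :=
          htop ▸ weak_duality' hg_bot p w
        have h2 : (⊤ : EReal) ≤ econj g 0 + econj (scal 0 D F) p :=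
          htop ▸ weak_duality' hg_bot p 0
        rw [top_le_iff.1 h1, top_le_iff.1 h2]
    · set a : ℝ := (econj (compFn g D F) p).toReal with ha
      have haeq : econj (compFn g D F) p = (a : EReal) :=
        (EReal.coe_toReal htop (hcompbot p)).symm
      have h_le : ∀ x ∈ D, ((⟪p, x⟫ : ℝ) : EReal) - g (F x) ≤ (a : EReal) := by
        intro x hx
        have h1 := le_iSup (fun x => ((⟪p, x⟫ : ℝ) : EReal) - compFn g D F x) x
        rw [compFn, if_pos hx] at h1
        exact h1.trans_eq haeq
      obtain ⟨v, hv1, hv2⟩ := sep_exists_multiplier hK_cone hK_conv hF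
        ⟨⟨ys, hys⟩, hg_bot⟩ hg_conv hM hxb hFxb p a h_le
      have hvmem : v ∈ -polarCone K := by
        rw [Set.mem_neg]
        intro x hx
        rw [inner_neg_left]
        linarith [hv1 x hx]
      have hub : econj g v + econj (scal v D F) p ≤ (a : EReal) := by
        apply EReal.add_le_of_forall_lt
        intro a' ha' b' hb'
        rw [econj] at ha' hb'
        obtain ⟨y, hy⟩ := lt_iSup_iff.1 ha'
        obtain ⟨x, hx⟩ := lt_iSup_iff.1 hb'
        by_cases hxD : x ∈ D
        · have hterm : ((⟪p, x⟫ : ℝ) : EReal) - scal v D F x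
              = ((⟪p, x⟫ - ⟪v, F x⟫ : ℝ) : EReal) := by
            rw [scal, if_pos hxD, ← EReal.coe_sub]
          rw [hterm] at hx
          calc a' + b' ≤ (((⟪v, y⟫ : ℝ) : EReal) - g y) + ((⟪p, x⟫ - ⟪v, F x⟫ : ℝ) : EReal) :=
                add_le_add hy.le hx.le
            _ ≤ (a : EReal) := hv2 x hxD y
        · rw [scal, if_neg hxD] at hx
          simp [EReal.sub_top] at hx
      have heq : econj (compFn g D F) p = econj g v + econj (scal v D F) p :=
        le_antisymm (weak_duality' hg_bot p v) (haeq ▸ hub)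
      exact ⟨v, hvmem, heq, fun w hw => heq ▸ weak_duality' hg_bot p w⟩
  refine ⟨hmain, ?_⟩
  ext p
  simp only [edom, Set.mem_setOf_eq]
  constructor
  · intro hp
    obtain ⟨v, hvmem, heq, _⟩ := hmain p
    have hlt : econj g v + econj (scal v D F) p < ⊤ := heq ▸ hp
    obtain ⟨hA, hB⟩ := ereal_lt_top_of_add_lt_top (hAbot v) (hBbot p v) hlt
    exact ⟨v, ⟨hA, hvmem⟩, hB⟩
  · rintro ⟨v, ⟨hv1, hv2⟩, hv3⟩
    exact lt_of_le_of_lt (weak_duality' hg_bot p v) (EReal.add_lt_top hv1.ne hv3.ne)
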